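/- Let n be a positive integer and k ≥ 1 an integer, and let J_{n,k} ⊆ K[x_1,…,x_n] be the ideal generated by all squarefree monomials x_{i_1} x_{i_2} ··· x_{i_{k+2}} with 1 ≤ i_1 < i_2 < … < i_{k+2} ≤ n for which there exists t < k+2 with i_{t+1} − i_t ≥ 2. Then J_{n,k} has linear quotients with respect to the lexicographic order induced by x_1 > x_2 > … > x_n: for each generator v, the colon ideal ( u ∈ G(J_{n,k}) : u >_lex v ) : v is generated by variables. (J_{n,k} is the k-th homological shift ideal HS_k(I(P_n^c)) of the edge ideal of the complement of the path P_n: 1–2–…–n.) -/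
import Mathlib


open MvPolynomial Pointwise

/-- `T = {i_1 < ⋯ < i_r}` has a gap: some consecutive pair of elements of `T` differs by ≥ 2,
i.e. there are `a, b ∈ T` with `b` the successor of `a` in `T` and `b - a ≥ 2`. -/
def HasGap {n : ℕ} (T : Finset (Fin n)) : Prop :=
  ∃ a ∈ T, ∃ b ∈ T, (a : ℕ) + 2 ≤ (b : ℕ) ∧ ∀ x ∈ T, a < x → b ≤ x

/-- The exponent vector of the squarefree monomial `x_T = ∏_{i ∈ T} x_i`. -/
noncomputable def sqfree {n : ℕ} (T : Finset (Fin n)) : Fin n →₀ ℕ :=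
  ∑ i ∈ T, Finsupp.single i 1

/-- `a >_lex b` for the lexicographic order on monomials induced by `x_1 > x_2 > ⋯ > x_n`. -/
def lexGT {n : ℕ} (a b : Fin n →₀ ℕ) : Prop :=
  ∃ i : Fin n, (∀ j : Fin n, j < i → a j = b j) ∧ b i < a i

lemma sqfree_apply {n : ℕ} (T : Finset (Fin n)) (j : Fin n) :
    sqfree T j = if j ∈ T then 1 else 0 := by
  classical
  simp only [sqfree, Finsupp.finset_sum_apply, Finsupp.single_apply]
  rw [Finset.sum_ite_eq' T j (fun _ => 1)]

/-- Auxiliary facts about `W = (insert q T).erase t` for `q ∉ T`, `t ∈ T`, `q < t`. -/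
lemma Waux {n : ℕ} (T : Finset (Fin n)) (q t : Fin n) (hqT : q ∉ T) (ht : t ∈ T)
    (hqt : q < t) :
    ((insert q T).erase t).card = T.card ∧
    lexGT (sqfree ((insert q T).erase t)) (sqfree T) ∧
    (∀ j, sqfree ((insert q T).erase t) j ≤ Finsupp.single q 1 j + sqfree T j) := by
  classical
  set W := (insert q T).erase t with hW
  have hqne : q ≠ t := ne_of_lt hqt
  have hqW : q ∈ W := Finset.mem_erase.2 ⟨hqne, Finset.mem_insert_self _ _⟩
  refine ⟨?_, ⟨q, ?_, ?_⟩, ?_⟩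
  · rw [Finset.card_erase_of_mem (Finset.mem_insert_of_mem ht),
      Finset.card_insert_of_notMem hqT]
    omega
  · intro j hj
    have hjt : j ≠ t := ne_of_lt (lt_trans hj hqt)
    have hjq : j ≠ q := ne_of_lt hj
    have : j ∈ W ↔ j ∈ T := by
      simp [hW, Finset.mem_erase, Finset.mem_insert, hjt, hjq]
    rw [sqfree_apply, sqfree_apply]
    simp [this]
  · rw [sqfree_apply, sqfree_apply]
    simp [hqW, hqT]
  · intro j
    rw [sqfree_apply, sqfree_apply, Finsupp.single_apply]
    by_cases hjW : j ∈ W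
    · have := Finset.mem_insert.1 (Finset.mem_of_mem_erase hjW)
      rcases this with rfl | hjT
      · simp [hjW, hqT]
      · have h1 : (1:ℕ) ≤ (if q = j then 1 else 0) + 1 := Nat.le_add_left 1 _
        simpa [hjW, hjT] using h1
    · simp [hjW]

/-- The key combinatorial lemma (the linear quotients argument). -/
lemma key_lemma {n k : ℕ} {T U : Finset (Fin n)} (hT : T.card = k + 2) (hU : U.card = k + 2)
    (hgU : HasGap U) (hlex : lexGT (sqfree U) (sqfree T)) (m : Fin n →₀ ℕ)
    (hm : ∀ j, sqfree U j ≤ m j + sqfree T j) :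
    ∃ i : Fin n, m i ≠ 0 ∧ ∃ W : Finset (Fin n), W.card = k + 2 ∧ HasGap W ∧
      lexGT (sqfree W) (sqfree T) ∧ ∀ j, sqfree W j ≤ Finsupp.single i 1 j + sqfree T j := by
  classical
  obtain ⟨q, hag, hlt⟩ := hlex
  rw [sqfree_apply, sqfree_apply] at hlt
  have hqU : q ∈ U := by by_contra h; simp [h] at hlt
  have hqT : q ∉ T := by intro h; simp [h, hqU] at hlt
  have hag' : ∀ j, j < q → (j ∈ U ↔ j ∈ T) := by
    intro j hj
    have := hag j hj
    rw [sqfree_apply, sqfree_apply] at this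
    by_cases h1 : j ∈ U <;> by_cases h2 : j ∈ T <;> simp_all
  have hmq : m q ≠ 0 := by
    have := hm q
    rw [sqfree_apply, sqfree_apply] at this
    simp [hqU, hqT] at this
    omega
  by_cases hA : ∃ t ∈ T, q < t ∧ ∃ t' ∈ T, t < t'
  · -- there is a non-maximal element of `T` above `q`
    obtain ⟨t, ht, hqt, t', ht', htt'⟩ := hA
    obtain ⟨hcard, hlexW, hbound⟩ := Waux T q t hqT ht hqt
    refine ⟨q, hmq, (insert q T).erase t, by rw [hcard, hT], ?_, hlexW, hbound⟩
    -- gap of W: neighbors of t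
    set A := (insert q T).filter (fun x => x < t) with hAdef
    have hqA : q ∈ A := Finset.mem_filter.2 ⟨Finset.mem_insert_self _ _, hqt⟩
    set B := T.filter (fun x => t < x) with hBdef
    have ht'B : t' ∈ B := Finset.mem_filter.2 ⟨ht', htt'⟩
    set a := A.max' ⟨q, hqA⟩ with ha
    set b := B.min' ⟨t', ht'B⟩ with hb
    have haA : a ∈ A := Finset.max'_mem _ _
    have hbB : b ∈ B := Finset.min'_mem _ _
    obtain ⟨haT, hat⟩ := Finset.mem_filter.1 haA
    obtain ⟨hbT, htb⟩ := Finset.mem_filter.1 hbB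
    refine ⟨a, Finset.mem_erase.2 ⟨ne_of_lt hat, haT⟩, b,
      Finset.mem_erase.2 ⟨(ne_of_lt htb).symm, Finset.mem_insert_of_mem hbT⟩, ?_, ?_⟩
    · have h1 : (a : ℕ) < (t : ℕ) := hat
      have h2 : (t : ℕ) < (b : ℕ) := htb
      omega
    · intro x hx hax
      obtain ⟨hxt, hxmem⟩ := Finset.mem_erase.1 hx
      by_cases hxlt : x < t
      · exact absurd (Finset.le_max' A x (Finset.mem_filter.2 ⟨hxmem, hxlt⟩))
          (not_le_of_gt hax)
      · have htx : t < x := lt_of_le_of_ne (le_of_not_gt hxlt) (Ne.symm hxt)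
        have hxT : x ∈ T := by
          rcases Finset.mem_insert.1 hxmem with rfl | h
          · exact absurd (lt_trans hqt htx) (lt_irrefl _)
          · exact h
        exact Finset.min'_le B x (Finset.mem_filter.2 ⟨hxT, htx⟩)
  · -- all elements of `T` above `q` are maximal (so there is exactly one of them)
    push_neg at hA
    have hex : ∃ t₀ ∈ T, q < t₀ := by
      by_contra h
      push_neg at h
      have hTU : T ⊆ U := by
        intro x hx
        have hxq : x < q := lt_of_le_of_ne (h x hx) (by rintro rfl; exact hqT hx)
        exact (hag' x hxq).2 hx
      have : T = U := Finset.eq_of_subset_of_card_le hTU (le_of_eq (hU.trans hT.symm))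
      rw [← this] at hqU
      exact hqT hqU
    obtain ⟨t₀, ht₀, hqt₀⟩ := hex
    have hmax : ∀ t' ∈ T, t' ≤ t₀ := by
      intro t' ht'
      exact hA t₀ ht₀ hqt₀ t' ht'
    obtain ⟨hcard, hlexW, hbound⟩ := Waux T q t₀ hqT ht₀ hqt₀
    set W := (insert q T).erase t₀ with hWdef
    by_cases hgW : HasGap W
    · exact ⟨q, hmq, W, by rw [hcard, hT], hgW, hlexW, hbound⟩
    · exfalso
      have hWU : W ⊆ U := by
        intro x hx
        obtain ⟨hxt, hxmem⟩ := Finset.mem_erase.1 hx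
        rcases Finset.mem_insert.1 hxmem with rfl | hxT
        · exact hqU
        · have hxq : x < q := by
            by_contra hxq
            have : q < x := lt_of_le_of_ne (le_of_not_gt hxq)
              (by rintro rfl; exact hqT hxT)
            exact hxt (le_antisymm (hmax x hxT) (hA x hxT this t₀ ht₀))
          exact (hag' x hxq).2 hxT
      have : W = U := Finset.eq_of_subset_of_card_le hWU
        (by rw [hcard, hT, hU])
      rw [← this] at hgU
      exact hgW hgU

/-- for `k ≥ 1`, the ideal `J_{n,k}` generated by all squarefree monomials
`x_{i_1} ⋯ x_{i_{k+2}}` with `i_1 < ⋯ < i_{k+2}` and `i_{t+1} - i_t ≥ 2` for some `t < k+2`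
(which is `HS_k(I(P_n^c))`) has linear quotients with respect to the lexicographic order induced
by `x_1 > ⋯ > x_n`: for each generator `v`, the colon ideal of the lex-greater generators by `v`
is generated by variables. -/
theorem stmt_11 {K : Type*} [Field K] (n k : ℕ) (hn : 0 < n) (hk : 1 ≤ k) :
    ∀ T : Finset (Fin n), T.card = k + 2 → HasGap T →
      ∃ S : Set (Fin n),
        Submodule.colon
          (Ideal.span {p : MvPolynomial (Fin n) K | ∃ U : Finset (Fin n),
            U.card = k + 2 ∧ HasGap U ∧ lexGT (sqfree U) (sqfree T) ∧
            p = monomial (sqfree U) 1})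
          (Ideal.span {(monomial (sqfree T) (1 : K))})
        = Ideal.span (MvPolynomial.X '' S) := by
  classical
  intro T hT hgT
  refine ⟨{i | ∃ W : Finset (Fin n), W.card = k + 2 ∧ HasGap W ∧
    lexGT (sqfree W) (sqfree T) ∧
    ∀ j, sqfree W j ≤ Finsupp.single i 1 j + sqfree T j}, ?_⟩
  have hset : {p : MvPolynomial (Fin n) K | ∃ U : Finset (Fin n),
      U.card = k + 2 ∧ HasGap U ∧ lexGT (sqfree U) (sqfree T) ∧
      p = monomial (sqfree U) 1} =
      (fun s => monomial s (1 : K)) '' {s | ∃ U : Finset (Fin n),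
        U.card = k + 2 ∧ HasGap U ∧ lexGT (sqfree U) (sqfree T) ∧ s = sqfree U} := by
    ext p
    constructor
    · rintro ⟨U, h1, h2, h3, rfl⟩
      exact ⟨sqfree U, ⟨U, h1, h2, h3, rfl⟩, rfl⟩
    · rintro ⟨s, ⟨U, h1, h2, h3, rfl⟩, rfl⟩
      exact ⟨U, h1, h2, h3, rfl⟩
  rw [hset]
  ext f
  rw [Ideal.mem_colon_span_singleton, mem_ideal_span_monomial_image, mem_ideal_span_X_image]
  constructor
  · -- colon ⊆ span of variables
    intro h m hmsupp
    have hmem : m + sqfree T ∈ (f * monomial (sqfree T) (1 : K)).support := by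
      rw [MvPolynomial.mem_support_iff, MvPolynomial.coeff_mul_monomial, mul_one]
      exact MvPolynomial.mem_support_iff.1 hmsupp
    obtain ⟨s, hs, hle⟩ := h _ hmem
    obtain ⟨U, h1, h2, h3, rfl⟩ := hs
    have hm : ∀ j, sqfree U j ≤ m j + sqfree T j := by
      intro j
      exact (Finsupp.le_def.1 hle) j
    obtain ⟨i, hi, W, hW1, hW2, hW3, hW4⟩ := key_lemma hT h1 h2 h3 m hm
    exact ⟨i, ⟨W, hW1, hW2, hW3, hW4⟩, hi⟩
  · -- span of variables ⊆ colon
    intro h m' hm'supp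
    have hsub : (f * monomial (sqfree T) (1 : K)).support ⊆
        f.support + (monomial (sqfree T) (1 : K)).support :=
      MvPolynomial.support_mul _ _
    have := hsub hm'supp
    rw [Finset.mem_add] at this
    obtain ⟨m, hm, s, hs, rfl⟩ := this
    have hsT : s = sqfree T := by
      have : (monomial (sqfree T) (1 : K)).support = {sqfree T} := by
        rw [MvPolynomial.support_monomial]
        simp
      rw [this] at hs
      exact Finset.mem_singleton.1 hs
    subst hsT
    obtain ⟨i, ⟨W, hW1, hW2, hW3, hW4⟩, hi⟩ := h m hm
    refine ⟨sqfree W, ⟨W, hW1, hW2, hW3, rfl⟩, ?_⟩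
    rw [Finsupp.le_def]
    intro j
    have := hW4 j
    rw [Finsupp.add_apply]
    rw [Finsupp.single_apply] at this
    by_cases hji : j = i
    · subst hji
      rw [if_pos rfl] at this
      have h1 : 1 ≤ m j := Nat.one_le_iff_ne_zero.2 hi
      omega
    · rw [if_neg (fun h => hji h.symm)] at this
      omega
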